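/- Let m ≥ 1 and t ≥ 0 be integers and let ρ ∈ [0,1]. Then μ_ρ({s ∈ ({0,1})^ℤ : (F_m^t s)(r) = 0 for all r ∈ {0, 1, …, m}}) = Σ_{j=1}^{t+1} (j/(t+1)) · C((m+1)(t+1), t+1−j) · ρ^{t+1−j} (1−ρ)^{m(t+1)+j}, where C denotes the binomial coefficient. (This is the probability P_t(0^{m+1}) of a block of m+1 zeros at time t starting from a Bernoulli(ρ) random initial configuration.) -/

import Mathlib

open scoped Classical
open MeasureTheory

/-- The Fukui–Ishibashi cellular automaton with maximum speed `m` on `{0,1}^ℤ`. -/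
noncomputable def fukuiIshibashi (m : ℕ) (s : ℤ → Bool) : ℤ → Bool := fun i =>
  if (s i = true ∧ s (i + 1) = true) ∨
     (s i = false ∧ ∃ j : ℕ, 1 ≤ j ∧ j ≤ m ∧ s (i - (j : ℤ)) = true ∧
        (∀ k : ℕ, 1 ≤ k → k < j → s (i - (k : ℤ)) = false) ∧
        (j = m ∨ s (i + 1) = true))
  then true else false

/-- `μ` is the Bernoulli(ρ) product measure on `{0,1}^ℤ`: every finite cylinder
has the corresponding product probability. -/
def IsBernoulli (μ : Measure (ℤ → Bool)) (ρ : ℝ) : Prop :=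
  ∀ (S : Finset ℤ) (b : ℤ → Bool),
    μ {s | ∀ i ∈ S, s i = b i}
      = ∏ i ∈ S, ENNReal.ofReal (if b i then ρ else 1 - ρ)

namespace FIaux

/-- number of ones of `s` in `[a,q]` -/
noncomputable def cnt (s : ℤ → Bool) (a q : ℤ) : ℕ :=
  ((Finset.Icc a q).filter (fun i => s i = true)).card

/-- ballot-type prefix condition on the window `[a,b]` -/
def Pc (m : ℕ) (s : ℤ → Bool) (a b : ℤ) : Prop :=
  ∀ q, a ≤ q → q ≤ b → ((m : ℤ) + 1) * (cnt s a q : ℤ) ≤ q - a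

/-- a car crosses the bond `i → i+1` -/
def phi (m : ℕ) (s : ℤ → Bool) (i : ℤ) : Prop :=
  ∃ p, i + 1 - (m : ℤ) ≤ p ∧ p ≤ i ∧ s p = true ∧
    ∀ x, p < x → x ≤ i + 1 → s x = false

noncomputable def Phi (m : ℕ) (s : ℤ → Bool) (i : ℤ) : ℤ :=
  if phi m s i then 1 else 0

lemma phi_right {m : ℕ} {s : ℤ → Bool} {i : ℤ} (h : phi m s i) : s (i+1) = false := by
  obtain ⟨p, h1, h2, h3, h4⟩ := h
  exact h4 (i+1) (by omega) (by omega)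

lemma fi_eq_true_iff (m : ℕ) (s : ℤ → Bool) (i : ℤ) :
    fukuiIshibashi m s i = true ↔
    ((s i = true ∧ s (i + 1) = true) ∨
     (s i = false ∧ ∃ j : ℕ, 1 ≤ j ∧ j ≤ m ∧ s (i - (j : ℤ)) = true ∧
        (∀ k : ℕ, 1 ≤ k → k < j → s (i - (k : ℤ)) = false) ∧
        (j = m ∨ s (i + 1) = true))) := by
  unfold fukuiIshibashi
  by_cases h : ((s i = true ∧ s (i + 1) = true) ∨
     (s i = false ∧ ∃ j : ℕ, 1 ≤ j ∧ j ≤ m ∧ s (i - (j : ℤ)) = true ∧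
        (∀ k : ℕ, 1 ≤ k → k < j → s (i - (k : ℤ)) = false) ∧
        (j = m ∨ s (i + 1) = true))) <;> simp [h]

/-- flow conservation identity -/
lemma flowX (m : ℕ) (hm : 1 ≤ m) (s : ℤ → Bool) (i : ℤ) :
    (if fukuiIshibashi m s i then (1:ℤ) else 0) =
      (if s i then (1:ℤ) else 0) + Phi m s (i-1) - Phi m s i := by
  have hiff := fi_eq_true_iff m s i
  cases hsi : s i with
  | true =>
    cases hsi1 : s (i+1) with
    | true =>
      have hF : fukuiIshibashi m s i = true := hiff.2 (Or.inl ⟨hsi, hsi1⟩)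
      have h1 : ¬ phi m s (i-1) := fun h => by
        have := phi_right h; rw [show i - 1 + 1 = i by ring] at this; simp [hsi] at this
      have h2 : ¬ phi m s i := fun h => by have := phi_right h; simp [hsi1] at this
      simp [Phi, hF, hsi, h1, h2]
    | false =>
      have hF : fukuiIshibashi m s i = false := by
        rw [Bool.eq_false_iff, Ne, hiff]
        rintro (⟨_, h⟩ | ⟨h, _⟩) <;> simp_all
      have h1 : ¬ phi m s (i-1) := fun h => by
        have := phi_right h; rw [show i - 1 + 1 = i by ring] at this; simp [hsi] at this
      have h2 : phi m s i := by
        refine ⟨i, by push_cast; omega, le_refl _, hsi, ?_⟩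
        intro x hx1 hx2
        have : x = i + 1 := by omega
        rw [this, hsi1]
      simp [Phi, hF, hsi, h1, h2]
  | false =>
    -- key case : s i = false
    have h2imp1 : phi m s i → phi m s (i-1) := by
      rintro ⟨p, hp1, hp2, hp3, hp4⟩
      have hpne : p ≠ i := fun h => by rw [h, hsi] at hp3; exact absurd hp3 (by simp)
      refine ⟨p, by omega, by omega, hp3, ?_⟩
      intro x hx1 hx2
      exact hp4 x hx1 (by omega)
    have key : fukuiIshibashi m s i = true ↔ (phi m s (i-1) ∧ ¬ phi m s i) := by
      rw [hiff]
      constructor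
      · rintro (⟨h, _⟩ | ⟨_, j, hj1, hjm, hcar, hzer, hlast⟩)
        · rw [hsi] at h; exact absurd h (by simp)
        · constructor
          · refine ⟨i - (j:ℤ), by push_cast; omega, by push_cast; omega, hcar, ?_⟩
            intro x hx1 hx2
            rcases eq_or_lt_of_le hx2 with h | h
            · rw [show x = i by omega, hsi]
            · have hk : x = i - ((i - x).toNat : ℤ) := by omega
              rw [hk]
              exact hzer (i - x).toNat (by omega) (by omega)
          · rintro ⟨p', h1', h2', h3', h4'⟩
            have hple : p' ≠ i := fun h => by rw [h, hsi] at h3'; exact absurd h3' (by simp)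
            rcases lt_trichotomy p' (i - (j:ℤ)) with h | h | h
            · have := h4' (i - (j:ℤ)) h (by omega)
              rw [this] at hcar; exact absurd hcar (by simp)
            · -- p' = i - j : then j < m, so s (i+1) = true, contradicting zeros
              have hjm : j ≠ m := by omega
              have hs1 : s (i+1) = true := hlast.resolve_left hjm
              have := h4' (i+1) (by omega) (by omega)
              rw [this] at hs1; exact absurd hs1 (by simp)
            · have := hzer (i - p').toNat (by omega) (by omega)
              rw [show i - ((i - p').toNat : ℤ) = p' by omega, h3'] at this
              exact absurd this (by simp)
      · rintro ⟨⟨p, hp1, hp2, hp3, hp4⟩, hnot⟩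
        refine Or.inr ⟨hsi, (i - p).toNat, by omega, by omega, ?_, ?_, ?_⟩
        · rw [show i - ((i - p).toNat : ℤ) = p by omega]; exact hp3
        · intro k hk1 hk2
          exact hp4 (i - (k:ℤ)) (by omega) (by omega)
        · by_contra hcon
          push_neg at hcon
          obtain ⟨hne, hs1⟩ := hcon
          replace hs1 : s (i+1) = false := by simpa using hs1
          apply hnot
          refine ⟨p, by omega, by omega, hp3, ?_⟩
          intro x hx1 hx2
          rcases eq_or_lt_of_le hx2 with h | h
          · rw [show x = i + 1 by omega, hs1]
          · exact hp4 x hx1 (by omega)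
    by_cases h1 : phi m s (i-1) <;> by_cases h2 : phi m s i
    · have hF : fukuiIshibashi m s i = false := by
        rw [Bool.eq_false_iff, Ne, key]; tauto
      simp [Phi, hF, hsi, h1, h2]
    · have hF : fukuiIshibashi m s i = true := key.2 ⟨h1, h2⟩
      simp [Phi, hF, hsi, h1, h2]
    · exact absurd (h2imp1 h2) h1
    · have hF : fukuiIshibashi m s i = false := by
        rw [Bool.eq_false_iff, Ne, key]; tauto
      simp [Phi, hF, hsi, h1, h2]

variable (s : ℤ → Bool)

lemma cnt_cast_sum (a q : ℤ) :
    (cnt s a q : ℤ) = ∑ i ∈ Finset.Icc a q, (if s i then (1:ℤ) else 0) := by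
  rw [cnt, Finset.card_filter]
  push_cast
  rfl

lemma cnt_split {a p q : ℤ} (h1 : a ≤ p + 1) (h2 : p ≤ q) :
    cnt s a q = cnt s a p + cnt s (p+1) q := by
  unfold cnt
  have hU : Finset.Icc a q = Finset.Icc a p ∪ Finset.Icc (p+1) q := by
    ext x
    simp only [Finset.mem_union, Finset.mem_Icc]
    omega
  rw [hU, Finset.filter_union, Finset.card_union_of_disjoint]
  refine Finset.disjoint_filter_filter ?_
  rw [Finset.disjoint_left]
  intro x hx hx2
  simp only [Finset.mem_Icc] at *
  omega

lemma cnt_succ_top {a q : ℤ} (h : a ≤ q) :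
    cnt s a q = cnt s a (q-1) + (if s q then 1 else 0) := by
  rw [cnt_split s (p := q - 1) (by omega) (by omega)]
  congr 1
  unfold cnt
  rw [show q - 1 + 1 = q by ring]
  rw [Finset.Icc_self]
  by_cases h : s q <;> simp [Finset.filter_singleton, h]

lemma cnt_mono {a q q' : ℤ} (h : q ≤ q') : cnt s a q ≤ cnt s a q' := by
  unfold cnt
  apply Finset.card_le_card
  apply Finset.filter_subset_filter
  exact Finset.Icc_subset_Icc_right h

lemma cnt_pos {a p q : ℤ} (h1 : a ≤ p) (h2 : p ≤ q) (h3 : s p = true) :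
    1 ≤ cnt s a q := by
  unfold cnt
  rw [Nat.succ_le_iff, Finset.card_pos]
  exact ⟨p, Finset.mem_filter.2 ⟨Finset.mem_Icc.2 ⟨h1, h2⟩, h3⟩⟩

lemma cnt_eq_zero {a q : ℤ} (h : cnt s a q = 0) :
    ∀ x, a ≤ x → x ≤ q → s x = false := by
  intro x hx1 hx2
  by_contra hc
  rw [Bool.not_eq_false] at hc
  have := cnt_pos s hx1 hx2 hc
  omega

lemma cnt_const_of_zeros {a p q : ℤ} (hpq : p ≤ q)
    (hz : ∀ x, p < x → x ≤ q → s x = false) : cnt s a q = cnt s a p := by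
  rcases le_or_gt a (p+1) with h | h
  · rw [cnt_split s (p := p) h hpq]
    have : cnt s (p+1) q = 0 := by
      unfold cnt
      rw [Finset.card_eq_zero, Finset.filter_eq_empty_iff]
      intro x hx
      rw [Finset.mem_Icc] at hx
      simp [hz x (by omega) (by omega)]
    omega
  · -- a > p + 1 : both intervals' counts: Icc a p empty
    have h1 : cnt s a p = 0 := by
      unfold cnt
      rw [Finset.card_eq_zero, Finset.filter_eq_empty_iff]
      intro x hx
      rw [Finset.mem_Icc] at hx; omega
    rw [h1]
    unfold cnt
    rw [Finset.card_eq_zero, Finset.filter_eq_empty_iff]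
    intro x hx
    rw [Finset.mem_Icc] at hx
    simp [hz x (by omega) (by omega)]

/-- rightmost one in `[a,q]` -/
lemma exists_rightmost {a q : ℤ} (h : 1 ≤ cnt s a q) :
    ∃ p, a ≤ p ∧ p ≤ q ∧ s p = true ∧ ∀ x, p < x → x ≤ q → s x = false := by
  have hne : ((Finset.Icc a q).filter (fun i => s i = true)).Nonempty :=
    Finset.card_pos.1 (by unfold cnt at h; omega)
  have hmem := Finset.max'_mem _ hne
  rw [Finset.mem_filter, Finset.mem_Icc] at hmem
  refine ⟨_, hmem.1.1, hmem.1.2, hmem.2, ?_⟩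
  intro x hx1 hx2
  by_contra hc
  rw [Bool.not_eq_false] at hc
  have hx : x ∈ (Finset.Icc a q).filter (fun i => s i = true) :=
    Finset.mem_filter.2 ⟨Finset.mem_Icc.2 ⟨by omega, hx2⟩, hc⟩
  have := Finset.le_max' _ x hx
  omega

/-- leftmost one in `[a,q]` -/
lemma exists_leftmost {a q : ℤ} (h : 1 ≤ cnt s a q) :
    ∃ p, a ≤ p ∧ p ≤ q ∧ s p = true ∧ ∀ x, a ≤ x → x < p → s x = false := by
  have hne : ((Finset.Icc a q).filter (fun i => s i = true)).Nonempty :=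
    Finset.card_pos.1 (by unfold cnt at h; omega)
  have hmem := Finset.min'_mem _ hne
  rw [Finset.mem_filter, Finset.mem_Icc] at hmem
  refine ⟨_, hmem.1.1, hmem.1.2, hmem.2, ?_⟩
  intro x hx1 hx2
  by_contra hc
  rw [Bool.not_eq_false] at hc
  have hx : x ∈ (Finset.Icc a q).filter (fun i => s i = true) :=
    Finset.mem_filter.2 ⟨Finset.mem_Icc.2 ⟨hx1, by omega⟩, hc⟩
  have := Finset.min'_le _ x hx
  omega

lemma cnt_eq_zero_of (s : ℤ → Bool) {a q : ℤ}
    (h : ∀ x, a ≤ x → x ≤ q → s x = false) : cnt s a q = 0 := by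
  unfold cnt
  rw [Finset.card_eq_zero, Finset.filter_eq_empty_iff]
  intro x hx
  rw [Finset.mem_Icc] at hx
  simp [h x hx.1 hx.2]

lemma Phi_nonneg (m : ℕ) (s : ℤ → Bool) (i : ℤ) : 0 ≤ Phi m s i := by
  unfold Phi; split <;> omega

lemma Phi_le_one (m : ℕ) (s : ℤ → Bool) (i : ℤ) : Phi m s i ≤ 1 := by
  unfold Phi; split <;> omega

lemma Phi_eq_zero {m : ℕ} {s : ℤ → Bool} {i : ℤ} (h : ¬ phi m s i) : Phi m s i = 0 := by
  unfold Phi; rw [if_neg h]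

/-- telescoped flow identity -/
lemma cnt_fi (m : ℕ) (hm : 1 ≤ m) (s : ℤ → Bool) (l : ℤ) :
    ∀ q, l - 1 ≤ q → (cnt (fukuiIshibashi m s) l q : ℤ) =
      (cnt s l q : ℤ) + Phi m s (l-1) - Phi m s q := by
  intro q hq
  refine Int.le_induction (motive := fun q _ => (cnt (fukuiIshibashi m s) l q : ℤ) =
      (cnt s l q : ℤ) + Phi m s (l-1) - Phi m s q) ?_ ?_ q hq
  · have h1 : cnt (fukuiIshibashi m s) l (l-1) = 0 := by
      unfold cnt
      rw [Finset.card_eq_zero, Finset.Icc_eq_empty (by omega), Finset.filter_empty]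
    have h2 : cnt s l (l-1) = 0 := by
      unfold cnt
      rw [Finset.card_eq_zero, Finset.Icc_eq_empty (by omega), Finset.filter_empty]
    simp only [h1, h2]
    push_cast
    ring
  · intro q hq ih
    have e1 : cnt (fukuiIshibashi m s) l (q+1)
        = cnt (fukuiIshibashi m s) l q + (if fukuiIshibashi m s (q+1) then 1 else 0) := by
      rw [cnt_succ_top _ (by omega), show q + 1 - 1 = q by ring]
    have e2 : cnt s l (q+1) = cnt s l q + (if s (q+1) then 1 else 0) := by
      rw [cnt_succ_top _ (by omega), show q + 1 - 1 = q by ring]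
    have e3 := flowX m hm s (q+1)
    rw [show q + 1 - 1 = q by ring] at e3
    push_cast [e1, e2]
    push_cast at ih
    omega

/-- If `Pc` holds for `fukuiIshibashi m s` on `[a+m,b-1]`, there is no car in `[a,a+m]`. -/
lemma no_low_car (m : ℕ) (hm : 1 ≤ m) (s : ℤ → Bool) (a b : ℤ) (hab : a + 2*m + 1 ≤ b)
    (hP' : Pc m (fukuiIshibashi m s) (a+m) (b-1)) : cnt s a (a+m) = 0 := by
  by_contra h0
  have h0' : 1 ≤ cnt s a (a+m) := by omega
  obtain ⟨p, hp1, hp2, hp3, hp4⟩ := exists_rightmost s h0'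
  -- find i ∈ [a+m, a+2m] with F s i = true
  have key : ∃ i, a + m ≤ i ∧ i ≤ a + 2*m ∧ fukuiIshibashi m s i = true := by
    by_cases hB : 1 ≤ cnt s (p+1) (p+m)
    · obtain ⟨p', hq1, hq2, hq3, hq4⟩ := exists_leftmost s hB
      have hp'gt : a + m < p' := by
        by_contra hc
        push_neg at hc
        have := hp4 p' (by omega) (by omega)
        rw [this] at hq3; exact absurd hq3 (by simp)
      by_cases he : p' = p + 1
      · refine ⟨p, by omega, by omega, ?_⟩
        rw [fi_eq_true_iff]
        exact Or.inl ⟨hp3, by rw [show p + 1 = p' by omega]; exact hq3⟩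
      · refine ⟨p' - 1, by omega, by omega, ?_⟩
        rw [fi_eq_true_iff]
        refine Or.inr ⟨hq4 (p'-1) (by omega) (by omega), (p' - 1 - p).toNat, by omega,
          by omega, ?_, ?_, Or.inr (by rw [show p' - 1 + 1 = p' by ring]; exact hq3)⟩
        · rw [show p' - 1 - ((p' - 1 - p).toNat : ℤ) = p by omega]; exact hp3
        · intro k hk1 hk2
          exact hq4 (p' - 1 - (k:ℤ)) (by omega) (by omega)
    · -- no car in (p, p+m] : full speed move to p+m
      have hz : ∀ x, p < x → x ≤ p + m → s x = false := by
        intro x hx1 hx2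
        by_contra hc
        rw [Bool.not_eq_false] at hc
        exact absurd (cnt_pos s (show p+1 ≤ x by omega) hx2 hc) hB
      refine ⟨p + m, by omega, by omega, ?_⟩
      rw [fi_eq_true_iff]
      refine Or.inr ⟨hz (p+m) (by omega) (by omega), m, hm, le_refl m, ?_, ?_, Or.inl rfl⟩
      · rw [show p + (m:ℤ) - (m:ℤ) = p by ring]; exact hp3
      · intro k hk1 hk2
        exact hz (p + m - (k:ℤ)) (by omega) (by omega)
  obtain ⟨i, hi1, hi2, hi3⟩ := key
  have := hP' i hi1 (by omega)
  have hc1 : 1 ≤ cnt (fukuiIshibashi m s) (a+m) i := cnt_pos _ hi1 (le_refl i) hi3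
  have : ((m:ℤ)+1) * 1 ≤ ((m:ℤ)+1) * (cnt (fukuiIshibashi m s) (a+m) i : ℤ) := by
    apply mul_le_mul_of_nonneg_left (by exact_mod_cast hc1) (by omega)
  omega

/-- The step lemma. -/
lemma step (m : ℕ) (hm : 1 ≤ m) (s : ℤ → Bool) (a b : ℤ) (hab : a + 2*m + 1 ≤ b) :
    Pc m (fukuiIshibashi m s) (a+m) (b-1) ↔ Pc m s a b := by
  have hsplit : ∀ s' : ℤ → Bool, cnt s' a (a+m) = 0 → ∀ q', a + m - 1 ≤ q' →
      (cnt s' (a+m) q' : ℤ) = cnt s' a q' := by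
    intro s' h0 q' hq'
    rcases eq_or_lt_of_le hq' with h | h
    · have e1 : cnt s' (a+m) q' = 0 := by
        unfold cnt
        rw [Finset.card_eq_zero, Finset.Icc_eq_empty (by omega), Finset.filter_empty]
      have e2 : cnt s' a q' ≤ cnt s' a (a+m) := cnt_mono s' (by omega)
      omega
    · have := cnt_split s' (a := a) (p := a + m - 1) (q := q') (by omega) (by omega)
      rw [show a + m - 1 + 1 = a + m by ring] at this
      have e2 : cnt s' a (a+m-1) ≤ cnt s' a (a+m) := cnt_mono s' (by omega)
      omega
  constructor
  · -- P' → P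
    intro hP'
    have h0 : cnt s a (a+m) = 0 := no_low_car m hm s a b hab hP'
    have hlow : ∀ x, a ≤ x → x ≤ a + m → s x = false := cnt_eq_zero s h0
    have hPhiIn : Phi m s (a+m-1) = 0 := by
      apply Phi_eq_zero
      rintro ⟨p, h1, h2, h3, -⟩
      rw [hlow p (by omega) (by omega)] at h3
      exact absurd h3 (by simp)
    -- master inequality from hP' via telescope
    have master : ∀ q', a + m ≤ q' → q' ≤ b - 1 →
        ((m:ℤ)+1) * (cnt s a q' : ℤ) ≤ q' - a - m + ((m:ℤ)+1) * Phi m s q' := by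
      intro q' h1 h2
      have hP := hP' q' h1 h2
      have htel := cnt_fi m hm s (a+m) q' (by omega)
      have hs1 := hsplit s h0 q' (by omega)
      rw [show a + m - 1 = a + (m:ℤ) - 1 by rfl, hPhiIn] at htel
      have hE : (cnt (fukuiIshibashi m s) (a+m) q' : ℤ) = (cnt s a q' : ℤ) - Phi m s q' := by
        omega
      have := mul_le_mul_of_nonneg_left (le_of_eq hE) (show (0:ℤ) ≤ (m:ℤ)+1 by omega)
      have := mul_le_mul_of_nonneg_left (ge_of_eq hE) (show (0:ℤ) ≤ (m:ℤ)+1 by omega)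
      nlinarith [hP]
    intro q hq1 hq2
    rcases le_or_gt q (a+m) with hcase | hcase
    · have : cnt s a q ≤ cnt s a (a+m) := cnt_mono s hcase
      have : cnt s a q = 0 := by omega
      rw [this]; push_cast; omega
    rcases lt_or_ge q b with hcase2 | hcase2
    · -- a+m < q ≤ b-1
      by_cases hph : phi m s q
      · obtain ⟨p, hp1, hp2, hp3, hp4⟩ := hph
        have hpge : a + m + 1 ≤ p := by
          by_contra hc
          push_neg at hc
          have hge : a ≤ p := by omega
          rw [hlow p hge (by omega)] at hp3
          exact absurd hp3 (by simp)
        rcases eq_or_lt_of_le hp2 with hpq | hpq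
        · -- p = q : car at q
          have hphiq1 : Phi m s (q-1) = 0 := by
            apply Phi_eq_zero
            intro hh
            have := phi_right hh
            rw [show q - 1 + 1 = q by ring, ← hpq, hp3] at this
            exact absurd this (by simp)
          have hm1 := master (q-1) (by omega) (by omega)
          rw [hphiq1] at hm1
          have hcnt : cnt s a q = cnt s a (q-1) + 1 := by
            rw [cnt_succ_top s (show a ≤ q by omega), ← hpq, hp3]
            norm_num
          rw [hcnt]; push_cast; linarith
        · -- p < q
          have hphip1 : Phi m s (p-1) = 0 := by
            apply Phi_eq_zero
            intro hh
            have := phi_right hh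
            rw [show p - 1 + 1 = p by ring, hp3] at this
            exact absurd this (by simp)
          have hm1 := master (p-1) (by omega) (by omega)
          rw [hphip1] at hm1
          have hcq : cnt s a q = cnt s a p := by
            apply cnt_const_of_zeros s (by omega)
            intro x hx1 hx2
            exact hp4 x hx1 (by omega)
          have hcp : cnt s a p = cnt s a (p-1) + 1 := by
            rw [cnt_succ_top s (show a ≤ p by omega), hp3]
            norm_num
          rw [hcq, hcp]; push_cast; linarith
      · have hm1 := master q (by omega) (by omega)
        rw [Phi_eq_zero hph] at hm1
        linarith
    · -- q = b
      have hqb : q = b := by omega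
      have hm1 := master (b-1) (by omega) (by omega)
      have hPhile := Phi_le_one m s (b-1)
      have hPhige := Phi_nonneg m s (b-1)
      by_cases hsb : s b = true
      · have hphib1 : Phi m s (b-1) = 0 := by
          apply Phi_eq_zero
          intro hh
          have := phi_right hh
          rw [show b - 1 + 1 = b by ring, hsb] at this
          exact absurd this (by simp)
        rw [hphib1] at hm1
        have hcnt : cnt s a b = cnt s a (b-1) + 1 := by
          rw [cnt_succ_top s (show a ≤ b by omega), hsb]
          norm_num
        rw [hqb, hcnt]; push_cast; linarith
      · have hcnt : cnt s a b = cnt s a (b-1) := by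
          rw [cnt_succ_top s (show a ≤ b by omega), Bool.not_eq_true] at *
          rw [hsb]; norm_num
        rw [hqb, hcnt]
        have h2 : ((m:ℤ)+1) * Phi m s (b-1) ≤ ((m:ℤ)+1) * 1 := by
          apply mul_le_mul_of_nonneg_left (Phi_le_one m s (b-1)) (by omega)
        linarith
  · -- P → P'
    intro hP
    have h0 : cnt s a (a+m) = 0 := by
      have := hP (a+m) (by omega) (by omega)
      by_contra hc
      have h1 : 1 ≤ cnt s a (a+m) := by omega
      have : ((m:ℤ)+1) * 1 ≤ ((m:ℤ)+1) * (cnt s a (a+m) : ℤ) := by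
        apply mul_le_mul_of_nonneg_left (by exact_mod_cast h1) (by omega)
      omega
    have hlow : ∀ x, a ≤ x → x ≤ a + m → s x = false := cnt_eq_zero s h0
    have hPhiIn : Phi m s (a+m-1) = 0 := by
      apply Phi_eq_zero
      rintro ⟨p, h1, h2, h3, -⟩
      rw [hlow p (by omega) (by omega)] at h3
      exact absurd h3 (by simp)
    intro q' h1 h2
    have htel := cnt_fi m hm s (a+m) q' (by omega)
    rw [hPhiIn] at htel
    have hs1 := hsplit s h0 q' (by omega)
    -- goal : (m+1) * cnt (F s) (a+m) q' ≤ q' - (a+m)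
    by_cases hph : phi m s q'
    · obtain ⟨p, hp1, hp2, hp3, hp4⟩ := hph
      have hcq : cnt s a q' = cnt s a p := by
        apply cnt_const_of_zeros s hp2
        intro x hx1 hx2
        exact hp4 x hx1 (by omega)
      have hPp := hP p (by omega) (by omega)
      have hphiq : Phi m s q' = 1 := by
        unfold Phi
        rw [if_pos ⟨p, hp1, hp2, hp3, hp4⟩]
      rw [hphiq] at htel
      rw [hcq] at hs1
      have hE : (cnt (fukuiIshibashi m s) (a+m) q' : ℤ) = (cnt s a p : ℤ) - 1 := by omega
      rw [hE]
      linarith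
    · rw [Phi_eq_zero hph] at htel
      rcases Nat.eq_zero_or_pos (cnt s a q') with hz | hpos
      · rw [hz] at hs1
        have hE : (cnt (fukuiIshibashi m s) (a+m) q' : ℤ) = 0 := by
          have := Phi_nonneg m s q'
          have hnn : (0:ℤ) ≤ (cnt (fukuiIshibashi m s) (a+m) q' : ℤ) := by positivity
          omega
        rw [hE]
        omega
      · obtain ⟨p, hp1, hp2, hp3, hp4⟩ := exists_rightmost s (show 1 ≤ cnt s a q' by omega)
        have hpge : a + m + 1 ≤ p := by
          by_contra hc
          push_neg at hc
          rw [hlow p hp1 (by omega)] at hp3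
          exact absurd hp3 (by simp)
        by_cases hs1' : s (q'+1) = true
        · have hPq := hP (q'+1) (by omega) (by omega)
          have hcnt : cnt s a (q'+1) = cnt s a q' + 1 := by
            rw [cnt_succ_top s (show a ≤ q' + 1 by omega), show q' + 1 - 1 = q' by ring, hs1']
            norm_num
          rw [hcnt] at hPq
          push_cast at hPq
          have hE : (cnt (fukuiIshibashi m s) (a+m) q' : ℤ) = (cnt s a q' : ℤ) := by omega
          rw [hE]
          linarith
        · have hple : p ≤ q' - m := by
            by_contra hc
            push_neg at hc
            apply hph
            refine ⟨p, by omega, hp2, hp3, ?_⟩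
            intro x hx1 hx2
            rcases eq_or_lt_of_le hx2 with h | h
            · rw [show x = q' + 1 by omega]
              rw [Bool.not_eq_true] at hs1'; exact hs1'
            · exact hp4 x hx1 (by omega)
          have hcq : cnt s a q' = cnt s a p := cnt_const_of_zeros s hp2 hp4
          have hPp := hP p (by omega) (by omega)
          have hE : (cnt (fukuiIshibashi m s) (a+m) q' : ℤ) = (cnt s a p : ℤ) := by omega
          rw [hE]
          linarith

lemma cnt_zero_small (m : ℕ) (s : ℤ → Bool) {a q b0 : ℤ} (hq1 : a ≤ q) (hq2 : q ≤ b0)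
    (hP : ((m : ℤ) + 1) * (cnt s a q : ℤ) ≤ q - a) (hsmall : q - a ≤ (m:ℤ)) :
    cnt s a q = 0 := by
  by_contra hc
  have h1 : (1:ℤ) ≤ (cnt s a q : ℤ) := by
    have : 1 ≤ cnt s a q := by omega
    exact_mod_cast this
  have := mul_le_mul_of_nonneg_left h1 (show (0:ℤ) ≤ (m:ℤ)+1 by omega)
  omega

lemma char (m : ℕ) (hm : 1 ≤ m) (t : ℕ) (s : ℤ → Bool) :
    (∀ r : ℕ, r ≤ m → (fukuiIshibashi m)^[t] s (r:ℤ) = false) ↔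
      Pc m s (-((m:ℤ) * t)) ((m:ℤ) + t) := by
  induction t generalizing s with
  | zero =>
    simp only [Function.iterate_zero, id_eq, Nat.cast_zero, mul_zero, neg_zero, add_zero]
    constructor
    · intro h q hq1 hq2
      have hc : cnt s 0 q = 0 := by
        apply cnt_eq_zero_of
        intro x hx1 hx2
        have := h x.toNat (by omega)
        rwa [show ((x.toNat : ℕ) : ℤ) = x by omega] at this
      rw [hc]
      push_cast
      omega
    · intro h r hr
      have hP := h (r:ℤ) (by omega) (by exact_mod_cast hr)
      have hc : cnt s 0 (r:ℤ) = 0 :=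
        cnt_zero_small m s (by omega) (le_refl _) hP (by omega)
      exact cnt_eq_zero s hc (r:ℤ) (by omega) (le_refl _)
  | succ t ih =>
    have hstep := step m hm s (-((m:ℤ) * ((t:ℤ)+1))) ((m:ℤ) + ((t:ℤ)+1)) (by
      have hmt : 0 ≤ (m:ℤ) * t := by positivity
      have hexp : (m:ℤ) * ((t:ℤ)+1) = (m:ℤ)*t + m := by ring
      omega)
    rw [show -((m:ℤ) * ((t:ℤ)+1)) + (m:ℤ) = -((m:ℤ) * t) by ring,
        show ((m:ℤ) + ((t:ℤ)+1)) - 1 = (m:ℤ) + t by ring] at hstep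
    simp only [Function.iterate_succ_apply]
    rw [ih (fukuiIshibashi m s), hstep]
    constructor <;> intro hh <;> [skip; skip] <;>
      (intro q hq1 hq2 ; refine le_trans (le_of_eq rfl) ?_) <;>
      [exact hh q (by push_cast at hq1 ⊢; omega) (by push_cast at hq2 ⊢; omega);
       exact hh q (by push_cast at hq1 ⊢; omega) (by push_cast at hq2 ⊢; omega)]

end FIaux

namespace FIcomb

/-- number of `true`s -/
noncomputable def ones {N : ℕ} (w : Fin N → Bool) : ℕ :=
  ∑ i : Fin N, (if w i then 1 else 0)

/-- number of `true`s at positions `≥ p` -/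
noncomputable def cntS {N : ℕ} (w : Fin N → Bool) (p : ℕ) : ℕ :=
  ∑ i : Fin N, (if p ≤ (i : ℕ) ∧ w i then 1 else 0)

/-- suffix ballot condition -/
def goodS (m N : ℕ) (w : Fin N → Bool) : Prop :=
  ∀ p : ℕ, p < N → (m+1) * cntS w p ≤ N - 1 - p

noncomputable def GS (m N k : ℕ) : ℕ :=
  (Finset.univ.filter (fun w : Fin N → Bool => goodS m N w ∧ ones w = k)).card

lemma cntS_zero {N : ℕ} (w : Fin N → Bool) : cntS w 0 = ones w := by
  unfold cntS ones
  refine Finset.sum_congr rfl fun i _ => ?_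
  simp

lemma cntS_le_ones {N : ℕ} (w : Fin N → Bool) (p : ℕ) : cntS w p ≤ ones w := by
  unfold cntS ones
  refine Finset.sum_le_sum fun i _ => ?_
  split <;> split <;> simp_all

lemma ones_cons {N : ℕ} (x : Bool) (v : Fin N → Bool) :
    ones (Fin.cons x v) = (if x then 1 else 0) + ones v := by
  unfold ones
  rw [Fin.sum_univ_succ]
  simp [Fin.cons_succ]

lemma cntS_cons_succ {N : ℕ} (x : Bool) (v : Fin N → Bool) (p : ℕ) :
    cntS (Fin.cons x v) (p+1) = cntS v p := by
  unfold cntS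
  rw [Fin.sum_univ_succ]
  simp only [Fin.val_zero, Fin.cons_zero, Fin.cons_succ, Fin.val_succ]
  rw [if_neg (by omega), zero_add]
  refine Finset.sum_congr rfl fun i _ => ?_
  refine if_congr ?_ rfl rfl
  constructor
  · rintro ⟨h1, h2⟩; exact ⟨by omega, h2⟩
  · rintro ⟨h1, h2⟩; exact ⟨by omega, h2⟩

lemma goodS_cons {m N : ℕ} (x : Bool) (v : Fin N → Bool) :
    goodS m (N+1) (Fin.cons x v) ↔
      ((m+1) * ((if x then 1 else 0) + ones v) ≤ N ∧ goodS m N v) := by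
  constructor
  · intro h
    constructor
    · have := h 0 (by omega)
      rwa [cntS_zero, ones_cons, Nat.sub_zero, Nat.add_sub_cancel] at this
    · intro p hp
      have := h (p+1) (by omega)
      rwa [cntS_cons_succ, show N + 1 - 1 - (p+1) = N - 1 - p by omega] at this
  · rintro ⟨h0, h⟩
    intro p hp
    cases p with
    | zero => rwa [cntS_zero, ones_cons, Nat.sub_zero, Nat.add_sub_cancel]
    | succ p =>
        rw [cntS_cons_succ, show N + 1 - 1 - (p+1) = N - 1 - p by omega]
        exact h p (by omega)

lemma GS_cons_sum (m N k : ℕ) :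
    GS m (N+1) k = ∑ x : Bool, ∑ v : Fin N → Bool,
      (if goodS m (N+1) (Fin.cons x v) ∧ ones (Fin.cons x v) = k then 1 else 0) := by
  unfold GS
  rw [Finset.card_filter]
  have e := Fintype.sum_equiv ((Fin.consEquiv (fun _ : Fin (N+1) => Bool)).symm)
    (fun w : Fin (N+1) → Bool => if goodS m (N+1) w ∧ ones w = k then (1:ℕ) else 0)
    (fun z : Bool × (Fin N → Bool) =>
      if goodS m (N+1) (Fin.cons z.1 z.2) ∧ ones (Fin.cons z.1 z.2) = k then (1:ℕ) else 0)
    (fun w => by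
      congr 1 <;> rw [Fin.consEquiv] <;> simp [Fin.cons_self_tail])
  rw [e, Fintype.sum_prod_type]

lemma GS_zero (m N : ℕ) : GS m N 0 = 1 := by
  unfold GS
  have : Finset.univ.filter (fun w : Fin N → Bool => goodS m N w ∧ ones w = 0)
      = {fun _ => false} := by
    ext w
    simp only [Finset.mem_filter, Finset.mem_univ, true_and, Finset.mem_singleton]
    constructor
    · rintro ⟨-, h0⟩
      funext i
      by_contra hc
      rw [Bool.not_eq_false] at hc
      have : (1:ℕ) ≤ ones w := by
        unfold ones
        calc (1:ℕ) = ∑ j : Fin N, (if j = i then 1 else 0) := by simp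
        _ ≤ _ := by
            refine Finset.sum_le_sum fun j _ => ?_
            split <;> split <;> simp_all
      omega
    · rintro rfl
      constructor
      · intro p hp
        have : cntS (N := N) (fun _ => false) p = 0 := by
          unfold cntS
          refine Finset.sum_eq_zero fun i _ => by simp
        rw [this, Nat.mul_zero]
        omega
      · unfold ones
        refine Finset.sum_eq_zero fun i _ => by simp
  rw [this, Finset.card_singleton]

lemma GS_eq_zero {m N k : ℕ} (h : N ≤ (m+1)*k) (hk : 1 ≤ k) : GS m N k = 0 := by
  unfold GS
  rw [Finset.card_eq_zero, Finset.filter_eq_empty_iff]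
  rintro w - ⟨hgood, hones⟩
  rcases Nat.eq_zero_or_pos N with hN | hN
  · -- N = 0 : ones w = 0 < k
    have : ones w = 0 := by
      unfold ones
      subst hN
      simp
    omega
  · have := hgood 0 (by omega)
    rw [cntS_zero, hones] at this
    omega

lemma GS_succ_succ (m N k : ℕ) :
    GS m (N+1) (k+1) =
      if (m+1)*(k+1) ≤ N then GS m N (k+1) + GS m N k else 0 := by
  rw [GS_cons_sum]
  rw [Fintype.sum_bool]
  have htrue : ∀ v : Fin N → Bool,
      (goodS m (N+1) (Fin.cons true v) ∧ ones (Fin.cons true v) = k+1) ↔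
      ((m+1)*(k+1) ≤ N ∧ (goodS m N v ∧ ones v = k)) := by
    intro v
    rw [goodS_cons, ones_cons]
    simp only [if_pos trivial]
    constructor
    · rintro ⟨⟨h1, h2⟩, h3⟩
      have hv : ones v = k := by omega
      subst hv
      rw [Nat.add_comm 1 (ones v)] at h1
      exact ⟨h1, h2, rfl⟩
    · rintro ⟨h1, h2, h3⟩
      subst h3
      refine ⟨⟨?_, h2⟩, by omega⟩
      rwa [Nat.add_comm 1 (ones v)]
  have hfalse : ∀ v : Fin N → Bool,
      (goodS m (N+1) (Fin.cons false v) ∧ ones (Fin.cons false v) = k+1) ↔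
      ((m+1)*(k+1) ≤ N ∧ (goodS m N v ∧ ones v = k+1)) := by
    intro v
    rw [goodS_cons, ones_cons]
    simp only [Bool.false_eq_true, if_false, zero_add]
    constructor
    · rintro ⟨⟨h1, h2⟩, h3⟩
      rw [h3] at h1
      exact ⟨h1, h2, h3⟩
    · rintro ⟨h1, h2, h3⟩
      rw [← h3] at h1
      exact ⟨⟨h1, h2⟩, h3⟩
  by_cases hc : (m+1)*(k+1) ≤ N
  · rw [if_pos hc]
    have e1 : ∑ v : Fin N → Bool,
        (if goodS m (N+1) (Fin.cons true v) ∧ ones (Fin.cons true v) = k+1 then 1 else 0)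
        = GS m N k := by
      unfold GS
      rw [Finset.card_filter]
      refine Finset.sum_congr rfl fun v _ => ?_
      refine if_congr ?_ rfl rfl
      rw [htrue v]
      tauto
    have e2 : ∑ v : Fin N → Bool,
        (if goodS m (N+1) (Fin.cons false v) ∧ ones (Fin.cons false v) = k+1 then 1 else 0)
        = GS m N (k+1) := by
      unfold GS
      rw [Finset.card_filter]
      refine Finset.sum_congr rfl fun v _ => ?_
      refine if_congr ?_ rfl rfl
      rw [hfalse v]
      tauto
    rw [e1, e2]
    omega
  · rw [if_neg hc]
    have e1 : ∑ v : Fin N → Bool,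
        (if goodS m (N+1) (Fin.cons true v) ∧ ones (Fin.cons true v) = k+1 then 1 else 0)
        = 0 := by
      refine Finset.sum_eq_zero fun v _ => ?_
      rw [if_neg]
      rw [htrue v]
      tauto
    have e2 : ∑ v : Fin N → Bool,
        (if goodS m (N+1) (Fin.cons false v) ∧ ones (Fin.cons false v) = k+1 then 1 else 0)
        = 0 := by
      refine Finset.sum_eq_zero fun v _ => ?_
      rw [if_neg]
      rw [hfalse v]
      tauto
    rw [e1, e2]

lemma choose_id1 (n k : ℕ) (hk : k ≤ n) :
    (n+1) * n.choose k = (n+1-k) * (n+1).choose k := by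
  have h1 : (n+1) * n.choose k = (n+1) * n.choose (n-k) := by rw [Nat.choose_symm hk]
  have h2 := Nat.add_one_mul_choose_eq n (n-k)
  have h3 : (n+1).choose (n-k+1) = (n+1).choose k := by
    rw [← Nat.choose_symm (show n-k+1 ≤ n+1 by omega)]
    congr 1
    omega
  rw [h1]
  rw [h2, h3]
  rw [Nat.mul_comm]
  congr 1
  omega

lemma choose_id2 (n k : ℕ) :
    (n+1) * n.choose k = (k+1) * (n+1).choose (k+1) := by
  have h := Nat.add_one_mul_choose_eq n k
  rw [h, Nat.mul_comm]

lemma GS_formula (m : ℕ) : ∀ N k : ℕ, (m+1)*k < N →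
    N * GS m N k = (N - (m+1)*k) * N.choose k := by
  intro N
  induction N with
  | zero => intro k h; omega
  | succ N ih =>
    intro k h
    cases k with
    | zero =>
      rw [GS_zero]
      simp
    | succ k =>
      have hc : (m+1)*(k+1) ≤ N := by omega
      rw [GS_succ_succ, if_pos hc]
      have hexp : (m+1)*(k+1) = (m+1)*k + (m+1) := by ring
      have hkN : k+1 ≤ N := le_trans (Nat.le_mul_of_pos_left (k+1) (by omega)) hc
      have hk' : (m+1)*k < N := by omega
      have F2 := ih k hk'
      apply Nat.eq_of_mul_eq_mul_left (show 0 < N by omega)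
      have P2 : ((N:ℤ)+1) * (N.choose (k+1) : ℤ) = ((N:ℤ) - k) * ((N+1).choose (k+1) : ℤ) := by
        have hz := congrArg (Nat.cast : ℕ → ℤ) (choose_id1 N (k+1) hkN)
        push_cast [Nat.cast_sub (show k ≤ N by omega), Nat.cast_sub (show k+1 ≤ N+1 by omega)] at hz
        linear_combination hz
      have P3 : ((N:ℤ)+1) * (N.choose k : ℤ) = ((k:ℤ) + 1) * ((N+1).choose (k+1) : ℤ) := by
        have := choose_id2 N k
        exact_mod_cast this
      have F2z : (N:ℤ) * (GS m N k : ℤ) = ((N:ℤ) - ((m:ℤ)+1)*(k:ℤ)) * (N.choose k : ℤ) := by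
        have hz := congrArg (Nat.cast : ℕ → ℤ) F2
        push_cast [Nat.cast_sub (le_of_lt hk')] at hz
        linear_combination hz
      rcases eq_or_lt_of_le hc with heq | hlt
      · -- (m+1)*(k+1) = N
        have hGS1 : GS m N (k+1) = 0 := GS_eq_zero (le_of_eq heq.symm) (by omega)
        rw [hGS1]
        zify
        rw [Nat.cast_sub (by omega : (m+1)*(k+1) ≤ N+1)]
        have heqz : ((m:ℤ)+1)*((k:ℤ)+1) = (N:ℤ) := by
          have h' : ((m+1)*(k+1) : ℕ) = N := heq
          have := congrArg (Nat.cast : ℕ → ℤ) h'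
          push_cast at this
          linarith
        push_cast
        linear_combination ((N:ℤ)+1) * F2z + (((m:ℤ)+1)) * P3 +
          (((N:ℤ)+1) * (((N+1).choose (k+1) : ℤ) - (N.choose k : ℤ))) * heqz
      · -- (m+1)*(k+1) < N
        have F1 := ih (k+1) hlt
        have F1z : (N:ℤ) * (GS m N (k+1) : ℤ)
            = ((N:ℤ) - ((m:ℤ)+1)*((k:ℤ)+1)) * (N.choose (k+1) : ℤ) := by
          have hz := congrArg (Nat.cast : ℕ → ℤ) F1
          push_cast [Nat.cast_sub (le_of_lt hlt)] at hz
          linear_combination hz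
        zify
        rw [Nat.cast_sub (by omega : (m+1)*(k+1) ≤ N+1)]
        push_cast
        linear_combination ((N:ℤ)+1) * F1z + ((N:ℤ)+1) * F2z +
          ((N:ℤ) - ((m:ℤ)+1)*((k:ℤ)+1)) * P2 + ((N:ℤ) - ((m:ℤ)+1)*(k:ℤ)) * P3

/-- prefix count -/
noncomputable def cntP {N : ℕ} (w : Fin N → Bool) (p : ℕ) : ℕ :=
  ∑ i : Fin N, (if (i : ℕ) ≤ p ∧ w i then 1 else 0)
def goodPf (m N : ℕ) (w : Fin N → Bool) : Prop :=
  ∀ p : ℕ, p < N → (m+1) * cntP w p ≤ p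

lemma ones_comp_rev {N : ℕ} (w : Fin N → Bool) : ones (w ∘ Fin.rev) = ones w := by
  unfold ones
  exact Fintype.sum_equiv (Fin.revPerm) _ _ (fun i => by simp)

lemma cntS_comp_rev {N : ℕ} (w : Fin N → Bool) (p : ℕ) (hp : p < N) :
    cntS (w ∘ Fin.rev) p = cntP w (N - 1 - p) := by
  unfold cntS cntP
  refine Fintype.sum_equiv (Fin.revPerm) _ _ (fun i => ?_)
  simp only [Fin.revPerm_apply, Function.comp_apply, Fin.rev_rev]
  refine if_congr ?_ rfl rfl
  have hi : (i : ℕ) < N := i.isLt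
  have hrev : ((Fin.rev i : Fin N) : ℕ) = N - 1 - (i : ℕ) := by
    rw [Fin.val_rev]
    omega
  rw [hrev]
  constructor
  · rintro ⟨h1, h2⟩; exact ⟨by omega, h2⟩
  · rintro ⟨h1, h2⟩; exact ⟨by omega, h2⟩

lemma goodS_comp_rev {m N : ℕ} (w : Fin N → Bool) :
    goodS m N (w ∘ Fin.rev) ↔ goodPf m N w := by
  constructor
  · intro h p hp
    have := h (N - 1 - p) (by omega)
    rwa [cntS_comp_rev w _ (by omega), show N - 1 - (N - 1 - p) = p by omega] at this
  · intro h p hp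
    rw [cntS_comp_rev w p hp]
    exact h (N - 1 - p) (by omega)

lemma GP_eq_GS (m N k : ℕ) :
    (Finset.univ.filter (fun w : Fin N → Bool => goodPf m N w ∧ ones w = k)).card
      = GS m N k := by
  unfold GS
  refine Finset.card_bij' (fun w _ => w ∘ Fin.rev) (fun w _ => w ∘ Fin.rev) ?_ ?_ ?_ ?_
  · intro w hw
    rw [Finset.mem_filter] at hw ⊢
    exact ⟨Finset.mem_univ _, (goodS_comp_rev w).2 hw.2.1, by rw [ones_comp_rev]; exact hw.2.2⟩
  · intro w hw
    rw [Finset.mem_filter] at hw ⊢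
    refine ⟨Finset.mem_univ _, ?_, by rw [ones_comp_rev]; exact hw.2.2⟩
    apply (goodS_comp_rev (w ∘ Fin.rev)).1
    have : (w ∘ Fin.rev) ∘ Fin.rev = w := by
      funext i; simp [Fin.rev_rev]
    rw [this]
    exact hw.2.1
  · intro w _
    funext i; simp [Fin.rev_rev]
  · intro w _
    funext i; simp [Fin.rev_rev]

lemma ones_le {N : ℕ} (w : Fin N → Bool) : ones w ≤ N := by
  unfold ones
  calc ∑ i : Fin N, (if w i then 1 else 0) ≤ ∑ _i : Fin N, 1 :=
        Finset.sum_le_sum (fun i _ => by split <;> omega)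
  _ = N := by simp

lemma ones_eq_card {N : ℕ} (w : Fin N → Bool) :
    ones w = (Finset.univ.filter (fun i => w i = true)).card := by
  rw [Finset.card_filter]
  unfold ones
  refine Finset.sum_congr rfl fun i _ => ?_
  refine if_congr (by simp) rfl rfl

end FIcomb

namespace FIfinal
open FIaux FIcomb

variable (m t : ℕ)

def aZ : ℤ := -((m:ℤ)*t)
def NN : ℕ := (m+1)*(t+1)

lemma NN_pos : 0 < NN m t := by unfold NN; positivity

lemma hb_eq : (m:ℤ) + t = aZ m t + NN m t - 1 := by
  unfold aZ NN; push_cast; ring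

def res (s : ℤ → Bool) : Fin (NN m t) → Bool := fun j => s (aZ m t + j)

noncomputable def extw (w : Fin (NN m t) → Bool) : ℤ → Bool :=
  fun x => if h : (x - aZ m t).toNat < NN m t ∧ aZ m t ≤ x
    then w ⟨(x - aZ m t).toNat, h.1⟩ else false

lemma extw_spec (w : Fin (NN m t) → Bool) (j : Fin (NN m t)) :
    extw m t w (aZ m t + j) = w j := by
  have hlt := j.isLt
  have h1 : (aZ m t + (j:ℤ) - aZ m t).toNat = (j:ℕ) := by omega
  unfold extw
  split_ifs with h
  · exact congrArg w (Fin.ext h1)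
  · exfalso
    apply h
    refine ⟨by omega, by omega⟩

lemma cnt_eq_cntP (s : ℤ → Bool) (p : ℕ) (hp : p < NN m t) :
    cnt s (aZ m t) (aZ m t + p) = cntP (res m t s) p := by
  have hset : (Finset.Icc (aZ m t) (aZ m t + p)).filter (fun i => s i = true)
      = (Finset.Icc (aZ m t) (aZ m t + NN m t - 1)).filter
          (fun i => i ≤ aZ m t + p ∧ s i = true) := by
    ext x
    simp only [Finset.mem_filter, Finset.mem_Icc]
    constructor
    · rintro ⟨⟨h1, h2⟩, h3⟩
      exact ⟨⟨h1, by omega⟩, h2, h3⟩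
    · rintro ⟨⟨h1, h2⟩, h3, h4⟩
      exact ⟨⟨h1, h3⟩, h4⟩
  unfold cnt
  rw [hset, Finset.card_filter]
  unfold cntP
  refine Finset.sum_nbij' (i := fun x => (⟨(x - aZ m t).toNat % NN m t,
      Nat.mod_lt _ (NN_pos m t)⟩ : Fin (NN m t)))
    (j := fun jj => aZ m t + (jj : ℤ)) ?_ ?_ ?_ ?_ ?_
  · intro x _
    exact Finset.mem_univ _
  · intro jj _
    show aZ m t + (jj:ℤ) ∈ Finset.Icc (aZ m t) (aZ m t + NN m t - 1)
    rw [Finset.mem_Icc]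
    have := jj.isLt
    omega
  · intro x hx
    rw [Finset.mem_Icc] at hx
    have hlt : (x - aZ m t).toNat < NN m t := by omega
    show aZ m t + (((x - aZ m t).toNat % NN m t : ℕ) : ℤ) = x
    rw [Nat.mod_eq_of_lt hlt]
    omega
  · intro jj _
    have := jj.isLt
    apply Fin.ext
    show (aZ m t + (jj:ℤ) - aZ m t).toNat % NN m t = (jj : ℕ)
    rw [show (aZ m t + (jj:ℤ) - aZ m t) = (jj:ℤ) by ring]
    rw [Int.toNat_natCast, Nat.mod_eq_of_lt jj.isLt]
  · intro x hx
    rw [Finset.mem_Icc] at hx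
    have hlt : (x - aZ m t).toNat < NN m t := by omega
    refine if_congr ?_ rfl rfl
    unfold res
    simp only [Nat.mod_eq_of_lt hlt]
    constructor
    · rintro ⟨h1, h2⟩
      refine ⟨by omega, ?_⟩
      rwa [show aZ m t + ((x - aZ m t).toNat : ℤ) = x by omega]
    · rintro ⟨h1, h2⟩
      refine ⟨by omega, ?_⟩
      rwa [show aZ m t + ((x - aZ m t).toNat : ℤ) = x by omega] at h2

lemma Pc_iff_goodPf (s : ℤ → Bool) :
    Pc m s (aZ m t) ((m:ℤ) + t) ↔ goodPf m (NN m t) (res m t s) := by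
  rw [hb_eq m t] at *
  constructor
  · intro h p hp
    have hq := h (aZ m t + p) (by omega) (by omega)
    rw [cnt_eq_cntP m t s p hp] at hq
    have : ((m:ℤ)+1) * (cntP (res m t s) p : ℤ) ≤ (p:ℤ) := by
      calc ((m:ℤ)+1) * (cntP (res m t s) p : ℤ) ≤ aZ m t + p - aZ m t := hq
      _ = (p:ℤ) := by ring
    exact_mod_cast this
  · intro h q hq1 hq2
    have hp : (q - aZ m t).toNat < NN m t := by omega
    have hq' : q = aZ m t + ((q - aZ m t).toNat : ℤ) := by omega
    have := h (q - aZ m t).toNat hp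
    rw [hq', cnt_eq_cntP m t s _ hp]
    have hz : ((m:ℤ)+1) * (cntP (res m t s) (q - aZ m t).toNat : ℤ)
        ≤ ((q - aZ m t).toNat : ℤ) := by exact_mod_cast this
    omega

noncomputable def G : Finset (Fin (NN m t) → Bool) :=
  Finset.univ.filter (fun w => goodPf m (NN m t) w)

def Cyl (w : Fin (NN m t) → Bool) : Set (ℤ → Bool) :=
  {s | ∀ i ∈ Finset.Icc (aZ m t) (aZ m t + NN m t - 1), s i = extw m t w i}

lemma mem_Cyl_iff (s : ℤ → Bool) (w : Fin (NN m t) → Bool) :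
    s ∈ Cyl m t w ↔ res m t s = w := by
  constructor
  · intro h
    funext j
    have hj := j.isLt
    have := h (aZ m t + j) (by rw [Finset.mem_Icc]; omega)
    rw [extw_spec] at this
    exact this
  · intro h i hi
    rw [Finset.mem_Icc] at hi
    have hp : (i - aZ m t).toNat < NN m t := by omega
    have hi' : i = aZ m t + (⟨(i - aZ m t).toNat, hp⟩ : Fin (NN m t)) := by
      simp only
      omega
    rw [hi', extw_spec, ← h]
    rfl

lemma event_eq :
    {s : ℤ → Bool | Pc m s (aZ m t) ((m:ℤ) + t)} = ⋃ w ∈ G m t, Cyl m t w := by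
  ext s
  simp only [Set.mem_setOf_eq, Set.mem_iUnion, exists_prop]
  rw [Pc_iff_goodPf]
  constructor
  · intro h
    exact ⟨res m t s, by rw [G, Finset.mem_filter]; exact ⟨Finset.mem_univ _, h⟩,
      (mem_Cyl_iff m t s _).2 rfl⟩
  · rintro ⟨w, hw, hs⟩
    rw [mem_Cyl_iff] at hs
    rw [G, Finset.mem_filter] at hw
    rw [hs]
    exact hw.2

lemma Cyl_measurable (w : Fin (NN m t) → Bool) : MeasurableSet (Cyl m t w) := by
  have : Cyl m t w = ⋂ i ∈ (Finset.Icc (aZ m t) (aZ m t + NN m t - 1) : Finset ℤ),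
      (fun s : ℤ → Bool => s i) ⁻¹' {extw m t w i} := by
    ext s
    simp only [Cyl, Set.mem_setOf_eq, Set.mem_iInter, Set.mem_preimage,
      Set.mem_singleton_iff]
  rw [this]
  exact MeasurableSet.biInter (Set.to_countable _)
    (fun i _ => (measurable_pi_apply i) (measurableSet_singleton _))

lemma Cyl_disjoint : (↑(G m t) : Set (Fin (NN m t) → Bool)).PairwiseDisjoint (Cyl m t) := by
  intro w _ w' _ hne
  rw [Function.onFun, Set.disjoint_left]
  intro s hs hs'
  rw [mem_Cyl_iff] at hs hs'
  exact hne (hs ▸ hs')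

open FIaux FIcomb

lemma measure_Cyl (m t : ℕ) (ρ : ℝ) (μ : Measure (ℤ → Bool)) (hber : IsBernoulli μ ρ)
    (w : Fin (NN m t) → Bool) :
    μ (Cyl m t w) = (ENNReal.ofReal ρ) ^ (ones w) *
      (ENNReal.ofReal (1 - ρ)) ^ (NN m t - ones w) := by
  have h1 : μ (Cyl m t w) = ∏ i ∈ Finset.Icc (aZ m t) (aZ m t + NN m t - 1),
      ENNReal.ofReal (if extw m t w i then ρ else 1 - ρ) := hber _ _
  have h2 : ∏ i ∈ Finset.Icc (aZ m t) (aZ m t + NN m t - 1),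
      ENNReal.ofReal (if extw m t w i then ρ else 1 - ρ)
      = ∏ jj : Fin (NN m t), ENNReal.ofReal (if w jj then ρ else 1 - ρ) := by
    refine Finset.prod_nbij' (i := fun x => (⟨(x - aZ m t).toNat % NN m t,
        Nat.mod_lt _ (NN_pos m t)⟩ : Fin (NN m t)))
      (j := fun jj => aZ m t + (jj : ℤ)) ?_ ?_ ?_ ?_ ?_
    · intro x _
      exact Finset.mem_univ _
    · intro jj _
      show aZ m t + (jj:ℤ) ∈ Finset.Icc (aZ m t) (aZ m t + NN m t - 1)
      rw [Finset.mem_Icc]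
      have := jj.isLt
      omega
    · intro x hx
      rw [Finset.mem_Icc] at hx
      have hlt : (x - aZ m t).toNat < NN m t := by omega
      show aZ m t + (((x - aZ m t).toNat % NN m t : ℕ) : ℤ) = x
      rw [Nat.mod_eq_of_lt hlt]
      omega
    · intro jj _
      apply Fin.ext
      show (aZ m t + (jj:ℤ) - aZ m t).toNat % NN m t = (jj : ℕ)
      rw [show (aZ m t + (jj:ℤ) - aZ m t) = (jj:ℤ) by ring]
      rw [Int.toNat_natCast, Nat.mod_eq_of_lt jj.isLt]
    · intro x hx
      rw [Finset.mem_Icc] at hx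
      have hlt : (x - aZ m t).toNat < NN m t := by omega
      have hxr : x = aZ m t + ((⟨(x - aZ m t).toNat % NN m t,
          Nat.mod_lt _ (NN_pos m t)⟩ : Fin (NN m t)) : ℤ) := by
        show x = aZ m t + (((x - aZ m t).toNat % NN m t : ℕ) : ℤ)
        rw [Nat.mod_eq_of_lt hlt]
        omega
      have hkey : extw m t w x = w ⟨(x - aZ m t).toNat % NN m t,
          Nat.mod_lt _ (NN_pos m t)⟩ := by
        conv_lhs => rw [hxr]
        exact extw_spec m t w _
      show ENNReal.ofReal (if extw m t w x = true then ρ else 1 - ρ)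
        = ENNReal.ofReal (if w ⟨(x - aZ m t).toNat % NN m t,
            Nat.mod_lt _ (NN_pos m t)⟩ = true then ρ else 1 - ρ)
      rw [hkey]
  rw [h1, h2]
  rw [← Finset.prod_filter_mul_prod_filter_not Finset.univ (fun jj => w jj = true)]
  have e1 : ∏ jj ∈ Finset.univ.filter (fun jj => w jj = true),
      ENNReal.ofReal (if w jj then ρ else 1 - ρ) = (ENNReal.ofReal ρ) ^ (ones w) := by
    rw [Finset.prod_congr rfl (g := fun _ => ENNReal.ofReal ρ)
      (fun jj hj => by rw [Finset.mem_filter] at hj; rw [if_pos hj.2])]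
    rw [Finset.prod_const, ← ones_eq_card]
  have e2 : ∏ jj ∈ Finset.univ.filter (fun jj => ¬ w jj = true),
      ENNReal.ofReal (if w jj then ρ else 1 - ρ)
      = (ENNReal.ofReal (1 - ρ)) ^ (NN m t - ones w) := by
    rw [Finset.prod_congr rfl (g := fun _ => ENNReal.ofReal (1 - ρ))
      (fun jj hj => by rw [Finset.mem_filter] at hj; rw [if_neg hj.2])]
    rw [Finset.prod_const]
    congr 1
    have hadd := Finset.card_filter_add_card_filter_not
      (s := (Finset.univ : Finset (Fin (NN m t)))) (p := fun jj => w jj = true)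
    rw [ones_eq_card]
    simp only [Finset.card_univ, Fintype.card_fin] at hadd
    omega
  rw [e1, e2]

lemma GS_cast_real (m t k : ℕ) (hk : k ≤ t) :
    (GS m ((m+1)*(t+1)) k : ℝ) * ((t:ℝ) + 1)
      = (((t:ℝ) + 1) - (k:ℝ)) * (((m+1)*(t+1)).choose k : ℝ) := by
  have hlt : (m+1)*k < (m+1)*(t+1) :=
    (mul_lt_mul_iff_right₀ (show 0 < m+1 by omega)).2 (by omega)
  have hform := GS_formula m ((m+1)*(t+1)) k hlt
  have hsplit : (m+1)*(t+1) = (m+1)*k + (m+1)*(t+1-k) := by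
    rw [← Nat.mul_add]
    congr 1
    omega
  have hsub : (m+1)*(t+1) - (m+1)*k = (m+1)*(t+1-k) := by omega
  rw [hsub] at hform
  have h2 : (t+1) * GS m ((m+1)*(t+1)) k = (t+1-k) * ((m+1)*(t+1)).choose k := by
    apply Nat.eq_of_mul_eq_mul_left (show 0 < m+1 by omega)
    calc (m+1) * ((t+1) * GS m ((m+1)*(t+1)) k)
        = ((m+1)*(t+1)) * GS m ((m+1)*(t+1)) k := by ring
    _ = ((m+1)*(t+1-k)) * ((m+1)*(t+1)).choose k := hform
    _ = (m+1) * ((t+1-k) * ((m+1)*(t+1)).choose k) := by ring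
  have h3 := congrArg (Nat.cast : ℕ → ℝ) h2
  push_cast [Nat.cast_sub (show k ≤ t+1 by omega)] at h3
  linarith

end FIfinal

/-- Starting from a Bernoulli(ρ) random configuration, the probability of a
block `0^{m+1}` at time `t` equals
`Σ_{j=1}^{t+1} (j/(t+1)) C((m+1)(t+1), t+1−j) ρ^{t+1−j} (1−ρ)^{m(t+1)+j}`. -/
theorem prob_block_of_zeros (m t : ℕ) (hm : 1 ≤ m) (ρ : ℝ)
    (hρ : ρ ∈ Set.Icc (0 : ℝ) 1)
    (μ : Measure (ℤ → Bool)) [IsProbabilityMeasure μ] (hber : IsBernoulli μ ρ) :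
    (μ {s | ∀ r : ℕ, r ≤ m → (fukuiIshibashi m)^[t] s (r : ℤ) = false}).toReal
      = ∑ j ∈ Finset.Icc 1 (t + 1),
          (j : ℝ) / (t + 1) * (Nat.choose ((m + 1) * (t + 1)) (t + 1 - j) : ℝ) *
            ρ ^ (t + 1 - j) * (1 - ρ) ^ (m * (t + 1) + j) := by
  obtain ⟨h0ρ, h1ρ⟩ := hρ
  have h1mρ : (0:ℝ) ≤ 1 - ρ := by linarith
  have hNN : FIfinal.NN m t = (m+1)*(t+1) := rfl
  have hNNsplit : FIfinal.NN m t = m*(t+1) + (t+1) := by rw [hNN]; ring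
  -- Step 1 : rewrite the event as a union of cylinders
  have hchar : ∀ s : ℤ → Bool,
      (∀ r : ℕ, r ≤ m → (fukuiIshibashi m)^[t] s (r:ℤ) = false)
        ↔ FIaux.Pc m s (FIfinal.aZ m t) ((m:ℤ)+t) := fun s => FIaux.char m hm t s
  have hset : {s : ℤ → Bool | ∀ r : ℕ, r ≤ m → (fukuiIshibashi m)^[t] s (r : ℤ) = false}
      = ⋃ w ∈ FIfinal.G m t, FIfinal.Cyl m t w := by
    rw [← FIfinal.event_eq]
    ext s
    exact hchar s
  rw [hset, measure_biUnion_finset (FIfinal.Cyl_disjoint m t)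
    (fun w _ => FIfinal.Cyl_measurable m t w)]
  rw [Finset.sum_congr rfl (fun w _ => FIfinal.measure_Cyl m t ρ μ hber w)]
  rw [ENNReal.toReal_sum (fun w _ => ENNReal.mul_ne_top
    (ENNReal.pow_ne_top ENNReal.ofReal_ne_top) (ENNReal.pow_ne_top ENNReal.ofReal_ne_top))]
  have hterm : ∀ w : Fin (FIfinal.NN m t) → Bool,
      ((ENNReal.ofReal ρ) ^ (FIcomb.ones w) *
        (ENNReal.ofReal (1-ρ)) ^ (FIfinal.NN m t - FIcomb.ones w)).toReal
      = ρ ^ (FIcomb.ones w) * (1-ρ) ^ (FIfinal.NN m t - FIcomb.ones w) := by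
    intro w
    rw [ENNReal.toReal_mul, ENNReal.toReal_pow, ENNReal.toReal_pow,
      ENNReal.toReal_ofReal h0ρ, ENNReal.toReal_ofReal h1mρ]
  rw [Finset.sum_congr rfl (fun w _ => hterm w)]
  -- Step 2 : group by number of ones
  rw [← Finset.sum_fiberwise_of_maps_to (g := fun w => FIcomb.ones w)
    (t := Finset.range (FIfinal.NN m t + 1))
    (fun w _ => by
      show FIcomb.ones w ∈ Finset.range (FIfinal.NN m t + 1)
      rw [Finset.mem_range]
      have := FIcomb.ones_le w
      omega)]
  have hinner : ∀ k ∈ Finset.range (FIfinal.NN m t + 1),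
      (∑ w ∈ (FIfinal.G m t).filter (fun w => FIcomb.ones w = k),
        ρ ^ (FIcomb.ones w) * (1-ρ) ^ (FIfinal.NN m t - FIcomb.ones w))
      = (FIcomb.GS m (FIfinal.NN m t) k : ℝ) * (ρ ^ k * (1-ρ) ^ (FIfinal.NN m t - k)) := by
    intro k _
    rw [Finset.sum_congr rfl (g := fun _ => ρ ^ k * (1-ρ) ^ (FIfinal.NN m t - k))
      (fun w hw => by
        rw [Finset.mem_filter] at hw
        rw [hw.2])]
    rw [Finset.sum_const, nsmul_eq_mul]
    congr 2
    have : (FIfinal.G m t).filter (fun w => FIcomb.ones w = k)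
        = Finset.univ.filter (fun w => FIcomb.goodPf m (FIfinal.NN m t) w ∧ FIcomb.ones w = k) := by
      rw [FIfinal.G, Finset.filter_filter]
    rw [this, FIcomb.GP_eq_GS]
  rw [Finset.sum_congr rfl hinner]
  -- Step 3 : terms with k > t vanish
  rw [← Finset.sum_subset (Finset.range_subset_range.2 (show t+1 ≤ FIfinal.NN m t + 1 by
      rw [hNN]; have : t+1 ≤ (m+1)*(t+1) := Nat.le_mul_of_pos_left _ (by omega); omega))
    (fun k hk1 hk2 => by
      rw [Finset.mem_range] at hk1
      rw [Finset.mem_range, not_lt] at hk2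
      have hGS0 : FIcomb.GS m (FIfinal.NN m t) k = 0 :=
        FIcomb.GS_eq_zero (by rw [hNN]; exact Nat.mul_le_mul_left (m+1) hk2) (by omega)
      rw [hGS0]
      norm_num)]
  -- Step 4 : reindex k = t+1-j
  refine Finset.sum_nbij' (i := fun k => t+1-k) (j := fun j => t+1-j) ?_ ?_ ?_ ?_ ?_
  · intro k hk
    rw [Finset.mem_range] at hk
    show t+1-k ∈ Finset.Icc 1 (t+1)
    rw [Finset.mem_Icc]
    omega
  · intro j hj
    rw [Finset.mem_Icc] at hj
    show t+1-j ∈ Finset.range (t+1)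
    rw [Finset.mem_range]
    omega
  · intro k hk
    rw [Finset.mem_range] at hk
    show t+1-(t+1-k) = k
    omega
  · intro j hj
    rw [Finset.mem_Icc] at hj
    show t+1-(t+1-j) = j
    omega
  · intro k hk
    rw [Finset.mem_range] at hk
    have hk' : k ≤ t := by omega
    show (FIcomb.GS m (FIfinal.NN m t) k : ℝ) * (ρ ^ k * (1-ρ) ^ (FIfinal.NN m t - k))
      = ((t+1-k : ℕ) : ℝ) / (t + 1) * (Nat.choose ((m + 1) * (t + 1)) (t + 1 - (t+1-k)) : ℝ) *
          ρ ^ (t + 1 - (t+1-k)) * (1 - ρ) ^ (m * (t + 1) + (t+1-k))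
    have e1 : t + 1 - (t+1-k) = k := by omega
    have e2 : m * (t + 1) + (t+1-k) = FIfinal.NN m t - k := by omega
    rw [e1, e2]
    have hcast : ((t+1-k : ℕ) : ℝ) = (t:ℝ) + 1 - (k:ℝ) := by
      push_cast [Nat.cast_sub (show k ≤ t+1 by omega)]
      ring
    have hGS : (FIcomb.GS m (FIfinal.NN m t) k : ℝ)
        = ((t+1-k : ℕ) : ℝ) / ((t:ℝ) + 1) * (Nat.choose ((m+1)*(t+1)) k : ℝ) := by
      have h := FIfinal.GS_cast_real m t k hk'
      rw [hcast, div_mul_eq_mul_div, eq_div_iff (show ((t:ℝ)+1) ≠ 0 by positivity)]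
      rw [hNN]
      linarith
    rw [hGS, hNN]
    push_cast
    ring
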